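/- Let t be a positive integer, (Ω, 𝔽, ℙ) a probability space, and S : Ω → Matrix (Fin t) (Fin t) ℝ a measurable random matrix that is almost surely symmetric positive semidefinite with E[‖S‖] < ∞. For a real upper-triangular t × t matrix T (T_{ij} = 0 for i > j) with T_{ii} ≥ 0 for all i and ∑_{i ≤ j} T_{ij}² = 1, define Ψ(T) = E[log det(I_t + S Tᵀ T)]. For i ≤ j let E^{(ij)} be the t × t matrix with entries (E^{(ij)})_{mn} = T_{in} δ_{mj} + T_{im} δ_{nj} (i.e., E^{(ij)} = ∂(TᵀT)/∂T_{ij}). If T maximizes Ψ over all real upper-triangular matrices with nonnegative diagonal and ∑_{i ≤ j} T_{ij}² = 1, then there exists μ ≥ 0 such that: for all i < j, E[tr((I_t + S TᵀT)^{-1} S E^{(ij)})] = 2 μ T_{ij}; for all i with T_{ii} > 0, E[tr((I_t + S TᵀT)^{-1} S E^{(ii)})] = 2 μ T_{ii}; and for all i with T_{ii} = 0, E[tr((I_t + S TᵀT)^{-1} S E^{(ii)})] ≤ 0. -/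

import Mathlib

open MeasureTheory Matrix

/-- Matrices inherit the product measurable structure. -/
instance matrixMeasurableSpace {m n α : Type*} [MeasurableSpace α] :
    MeasurableSpace (Matrix m n α) :=
  inferInstanceAs (MeasurableSpace (m → n → α))

attribute [local instance] Matrix.frobeniusSeminormedAddCommGroup

/-- A feasible Cholesky factor: real upper-triangular, nonnegative diagonal,
with `∑_{i ≤ j} T_{ij}² = 1`. -/
def CholeskyFeasible {t : ℕ} (T : Matrix (Fin t) (Fin t) ℝ) : Prop :=
  (∀ i j : Fin t, j < i → T i j = 0) ∧ (∀ i : Fin t, 0 ≤ T i i) ∧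
    ∑ p ∈ Finset.univ.filter (fun p : Fin t × Fin t => p.1 ≤ p.2), (T p.1 p.2) ^ 2 = 1

section SqrtPort
open scoped MatrixOrder

/-- square root of a PSD matrix (ported from the removed `Matrix.PosSemidef.sqrt`) -/
noncomputable def Matrix.PosSemidef.sqrt {n : Type*} [Fintype n] [DecidableEq n]
    {A : Matrix n n ℝ} (_hA : A.PosSemidef) : Matrix n n ℝ := CFC.sqrt A

lemma Matrix.PosSemidef.posSemidef_sqrt {n : Type*} [Fintype n] [DecidableEq n]
    {A : Matrix n n ℝ} (hA : A.PosSemidef) : hA.sqrt.PosSemidef :=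
  (CFC.sqrt_nonneg A).posSemidef

lemma Matrix.PosSemidef.sqrt_mul_self {n : Type*} [Fintype n] [DecidableEq n]
    {A : Matrix n n ℝ} (hA : A.PosSemidef) : hA.sqrt * hA.sqrt = A :=
  CFC.sqrt_mul_sqrt_self A hA.nonneg

end SqrtPort

namespace CKTaux
open Filter

variable {t : ℕ}

/-- entrywise ℓ¹ norm -/
noncomputable def L (M : Matrix (Fin t) (Fin t) ℝ) : ℝ := ∑ i, ∑ j, |M i j|

lemma L_nonneg (M : Matrix (Fin t) (Fin t) ℝ) : 0 ≤ L M :=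
  Finset.sum_nonneg fun _ _ => Finset.sum_nonneg fun _ _ => abs_nonneg _

lemma entry_abs_le_L (M : Matrix (Fin t) (Fin t) ℝ) (i j : Fin t) : |M i j| ≤ L M := by
  have h1 : |M i j| ≤ ∑ j', |M i j'| :=
    Finset.single_le_sum (f := fun j' => |M i j'|) (fun _ _ => abs_nonneg _) (Finset.mem_univ j)
  exact h1.trans <| Finset.single_le_sum (f := fun i' => ∑ j', |M i' j'|)
    (fun _ _ => Finset.sum_nonneg fun _ _ => abs_nonneg _) (Finset.mem_univ i)

lemma L_add (A B : Matrix (Fin t) (Fin t) ℝ) : L (A + B) ≤ L A + L B := by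
  simp only [L, ← Finset.sum_add_distrib]
  exact Finset.sum_le_sum fun i _ => Finset.sum_le_sum fun j _ => abs_add_le _ _

lemma L_smul (c : ℝ) (A : Matrix (Fin t) (Fin t) ℝ) : L (c • A) = |c| * L A := by
  simp [L, abs_mul, Finset.mul_sum]

lemma quad_expand (A : Matrix (Fin t) (Fin t) ℝ) (x : Fin t → ℝ) :
    x ⬝ᵥ (A *ᵥ x) = ∑ k, ∑ l, x k * (A k l * x l) := by
  simp [dotProduct, Matrix.mulVec, Finset.mul_sum]

lemma psd_apply {A : Matrix (Fin t) (Fin t) ℝ} (h : A.PosSemidef) (x : Fin t → ℝ) :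
    0 ≤ x ⬝ᵥ (A *ᵥ x) := by simpa using h.dotProduct_mulVec_nonneg x

lemma symm_apply {A : Matrix (Fin t) (Fin t) ℝ} (h : A.IsHermitian) (i j : Fin t) :
    A j i = A i j := by
  conv_lhs => rw [← h]
  simp [Matrix.conjTranspose_apply]

lemma psd_diag_nonneg {A : Matrix (Fin t) (Fin t) ℝ} (h : A.PosSemidef) (i : Fin t) :
    0 ≤ A i i := by
  have := psd_apply h (Pi.single i 1)
  rwa [quad_expand, Finset.sum_eq_single i, Finset.sum_eq_single i, Pi.single_eq_same,
    one_mul, mul_one] at this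
  · intro b _ hb; simp [Pi.single_eq_of_ne hb]
  · simp
  · intro b _ hb; simp [Pi.single_eq_of_ne hb]
  · simp

lemma psd_trace_nonneg {A : Matrix (Fin t) (Fin t) ℝ} (h : A.PosSemidef) : 0 ≤ A.trace :=
  Finset.sum_nonneg fun i _ => psd_diag_nonneg h i

lemma psd_diag_le_trace {A : Matrix (Fin t) (Fin t) ℝ} (h : A.PosSemidef) (i : Fin t) :
    A i i ≤ A.trace :=
  Finset.single_le_sum (f := fun i => A i i) (fun j _ => psd_diag_nonneg h j) (Finset.mem_univ i)

lemma psd_abs_entry_le {A : Matrix (Fin t) (Fin t) ℝ} (h : A.PosSemidef) (i j : Fin t) :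
    |A i j| ≤ A.trace := by
  rcases eq_or_ne i j with rfl | hij
  · rw [abs_of_nonneg (psd_diag_nonneg h i)]; exact psd_diag_le_trace h i
  · have key : ∀ c : ℝ, 0 ≤ A i i + c * A i j + (c * A i j + c * (c * A j j)) := by
      intro c
      have := psd_apply h ((Pi.single i 1 : Fin t → ℝ) + c • (Pi.single j 1 : Fin t → ℝ))
      rw [quad_expand] at this
      rw [Finset.sum_eq_add_of_mem i j (Finset.mem_univ i) (Finset.mem_univ j) hij] at this
      · rw [Finset.sum_eq_add_of_mem i j (Finset.mem_univ i) (Finset.mem_univ j) hij,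
          Finset.sum_eq_add_of_mem i j (Finset.mem_univ i) (Finset.mem_univ j) hij] at this
        · simpa [Pi.single_eq_of_ne hij, Pi.single_eq_of_ne (Ne.symm hij),
            symm_apply h.1 i j, mul_add, add_mul, mul_comm, mul_left_comm] using this
        · intro c' _ hc; simp [Pi.single_eq_of_ne hc.1, Pi.single_eq_of_ne hc.2]
        · intro c' _ hc; simp [Pi.single_eq_of_ne hc.1, Pi.single_eq_of_ne hc.2]
      · intro c' _ hc
        simp [Pi.single_eq_of_ne hc.1, Pi.single_eq_of_ne hc.2]
    have h1 := key 1
    have h2 := key (-1)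
    have habs : 2 * |A i j| ≤ A i i + A j j := by
      rcases abs_cases (A i j) with ⟨he, _⟩ | ⟨he, _⟩ <;> rw [he] <;> nlinarith
    have : A i i + A j j ≤ 2 * A.trace := by
      have := psd_diag_le_trace h i; have := psd_diag_le_trace h j; linarith
    linarith

lemma quad_single (A : Matrix (Fin t) (Fin t) ℝ) (i : Fin t) :
    (Pi.single i 1 : Fin t → ℝ) ⬝ᵥ (A *ᵥ (Pi.single i 1 : Fin t → ℝ)) = A i i := by
  rw [quad_expand, Finset.sum_eq_single i, Finset.sum_eq_single i, Pi.single_eq_same,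
    one_mul, mul_one]
  · intro b _ hb; simp [Pi.single_eq_of_ne hb]
  · simp
  · intro b _ hb; simp [Pi.single_eq_of_ne hb]
  · simp

lemma psd_two_abs_entry_le {A : Matrix (Fin t) (Fin t) ℝ} (h : A.PosSemidef) (i j : Fin t) :
    2 * |A i j| ≤ A i i + A j j := by
  rcases eq_or_ne i j with rfl | hij
  · rw [abs_of_nonneg (psd_diag_nonneg h i)]; ring_nf; rfl
  · have key : ∀ c : ℝ, 0 ≤ A i i + c * A i j + (c * A i j + c * (c * A j j)) := by
      intro c
      have := psd_apply h ((Pi.single i 1 : Fin t → ℝ) + c • (Pi.single j 1 : Fin t → ℝ))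
      rw [quad_expand] at this
      rw [Finset.sum_eq_add_of_mem i j (Finset.mem_univ i) (Finset.mem_univ j) hij] at this
      · rw [Finset.sum_eq_add_of_mem i j (Finset.mem_univ i) (Finset.mem_univ j) hij,
          Finset.sum_eq_add_of_mem i j (Finset.mem_univ i) (Finset.mem_univ j) hij] at this
        · simpa [Pi.single_eq_of_ne hij, Pi.single_eq_of_ne (Ne.symm hij),
            symm_apply h.1 i j, mul_add, add_mul, mul_comm, mul_left_comm] using this
        · intro c' _ hc; simp [Pi.single_eq_of_ne hc.1, Pi.single_eq_of_ne hc.2]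
        · intro c' _ hc; simp [Pi.single_eq_of_ne hc.1, Pi.single_eq_of_ne hc.2]
      · intro c' _ hc
        simp [Pi.single_eq_of_ne hc.1, Pi.single_eq_of_ne hc.2]
    have h1 := key 1
    have h2 := key (-1)
    rcases abs_cases (A i j) with ⟨he, _⟩ | ⟨he, _⟩ <;> rw [he] <;> nlinarith

lemma trace_eq_sum_eigenvalues {W : Matrix (Fin t) (Fin t) ℝ} (hW : W.IsHermitian) :
    W.trace = ∑ i, hW.eigenvalues i := by
  conv_lhs => rw [hW.spectral_theorem, Unitary.conjStarAlgAut_apply]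
  rw [Matrix.trace_mul_comm, ← Matrix.mul_assoc]
  have h1 : (star hW.eigenvectorUnitary.1 : Matrix (Fin t) (Fin t) ℝ) * hW.eigenvectorUnitary.1
      = 1 := Matrix.UnitaryGroup.star_mul_self _
  rw [h1, Matrix.one_mul, Matrix.trace_diagonal]
  simp

lemma logdet_le {W : Matrix (Fin t) (Fin t) ℝ} (hW : W.PosDef) :
    Real.log W.det ≤ W.trace - t := by
  have hev := hW.eigenvalues_pos
  rw [hW.1.det_eq_prod_eigenvalues, trace_eq_sum_eigenvalues hW.1]
  simp only [RCLike.ofReal_real_eq_id, id_eq]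
  rw [Real.log_prod (fun i _ => (hev i).ne')]
  calc ∑ i, Real.log (hW.1.eigenvalues i)
      ≤ ∑ i, (hW.1.eigenvalues i - 1) :=
        Finset.sum_le_sum fun i _ => Real.log_le_sub_one_of_pos (hev i)
    _ = (∑ i, hW.1.eigenvalues i) - t := by rw [Finset.sum_sub_distrib]; simp

lemma one_add_posDef {R : Matrix (Fin t) (Fin t) ℝ} (hR : R.PosSemidef) :
    (1 + R).PosDef := Matrix.PosDef.one.add_posSemidef hR

lemma herm_transpose {B : Matrix (Fin t) (Fin t) ℝ} (hB : B.IsHermitian) : Bᵀ = B := by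
  rw [← Matrix.conjTranspose_eq_transpose_of_trivial]; exact hB

lemma inv_quad_le {R : Matrix (Fin t) (Fin t) ℝ} (hR : R.PosSemidef) (x : Fin t → ℝ) :
    x ⬝ᵥ ((1 + R)⁻¹ *ᵥ x) ≤ x ⬝ᵥ x := by
  set B := 1 + R with hBdef
  have hB : B.PosDef := one_add_posDef hR
  have hBH : Bᵀ = B := herm_transpose hB.1
  have hdet : IsUnit B.det := hB.det_pos.ne'.isUnit
  set z := B⁻¹ *ᵥ x with hz
  have hxz : B *ᵥ z = x := by
    rw [hz, mulVec_mulVec, Matrix.mul_nonsing_inv _ hdet, one_mulVec]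
  have hRR : (R * R).PosSemidef := by
    have := posSemidef_conjTranspose_mul_self (R := ℝ) R
    rwa [hR.1] at this
  have hP : (R + R * R).PosSemidef := hR.add hRR
  have e1 : x ⬝ᵥ x = z ⬝ᵥ ((B * B) *ᵥ z) := by
    conv_lhs => rw [← hxz]
    rw [Matrix.dotProduct_mulVec, ← Matrix.mulVec_transpose, hBH, mulVec_mulVec]
    exact dotProduct_comm _ _
  have e2 : x ⬝ᵥ z = z ⬝ᵥ (B *ᵥ z) := by
    rw [dotProduct_comm, ← hxz]
  have e3 : z ⬝ᵥ ((B * B) *ᵥ z) - z ⬝ᵥ (B *ᵥ z) = z ⬝ᵥ ((R + R * R) *ᵥ z) := by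
    rw [← dotProduct_sub, ← Matrix.sub_mulVec]
    congr 2
    rw [hBdef]; noncomm_ring
  have h0 := psd_apply hP z
  have : x ⬝ᵥ ((1 + R)⁻¹ *ᵥ x) = x ⬝ᵥ z := rfl
  linarith

lemma inv_entry_abs_le_one {R : Matrix (Fin t) (Fin t) ℝ} (hR : R.PosSemidef) (i j : Fin t) :
    |(1 + R)⁻¹ i j| ≤ 1 := by
  have hB : (1 + R).PosDef := one_add_posDef hR
  have hA : ((1 + R)⁻¹).PosSemidef := hB.inv.posSemidef
  have hdiag : ∀ k, (1 + R)⁻¹ k k ≤ 1 := by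
    intro k
    have := inv_quad_le hR (Pi.single k 1)
    rwa [quad_single, dotProduct_single, Pi.single_eq_same, mul_one] at this
  have := psd_two_abs_entry_le hA i j
  have := hdiag i; have := hdiag j
  linarith

lemma inv_trace_le {R : Matrix (Fin t) (Fin t) ℝ} (hR : R.PosSemidef) :
    ((1 + R)⁻¹).trace ≤ t := by
  have hdiag : ∀ k, (1 + R)⁻¹ k k ≤ 1 := by
    intro k
    have := inv_quad_le hR (Pi.single k 1)
    rwa [quad_single, dotProduct_single, Pi.single_eq_same, mul_one] at this
  calc ((1 + R)⁻¹).trace = ∑ k, (1 + R)⁻¹ k k := rfl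
    _ ≤ ∑ _k : Fin t, (1 : ℝ) := Finset.sum_le_sum fun k _ => hdiag k
    _ = t := by simp


lemma trace_mul_expand (A B : Matrix (Fin t) (Fin t) ℝ) :
    (A * B).trace = ∑ i, ∑ k, A i k * B k i := by
  simp [Matrix.trace, Matrix.diag, Matrix.mul_apply]

lemma trace_conj_comm (A C : Matrix (Fin t) (Fin t) ℝ) :
    (A * (C * C)).trace = (C * A * C).trace := by
  calc (A * (C * C)).trace = ((A * C) * C).trace := by simp only [Matrix.mul_assoc]
    _ = (C * (A * C)).trace := (Matrix.trace_mul_comm _ _).symm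
    _ = (C * A * C).trace := by simp only [Matrix.mul_assoc]

lemma psd_trace_mul_nonneg {A B : Matrix (Fin t) (Fin t) ℝ}
    (hA : A.PosSemidef) (hB : B.PosSemidef) : 0 ≤ (A * B).trace := by
  classical
  have hC := hB.posSemidef_sqrt
  have hCC : hB.sqrt * hB.sqrt = B := hB.sqrt_mul_self
  have hP : (hB.sqrt * A * hB.sqrtᴴ).PosSemidef := hA.mul_mul_conjTranspose_same hB.sqrt
  rw [hC.1] at hP
  rw [← hCC, trace_conj_comm]
  exact psd_trace_nonneg hP

section SQ

variable {S Q Q₁ Q₂ : Matrix (Fin t) (Fin t) ℝ}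

lemma sqrt_conj_psd (hS : S.PosSemidef) {Q : Matrix (Fin t) (Fin t) ℝ} (hQ : Q.PosSemidef) :
    (hS.sqrt * Q * hS.sqrt).PosSemidef := by
  have := hQ.mul_mul_conjTranspose_same hS.sqrt
  rwa [hS.posSemidef_sqrt.1] at this

lemma det_eq_det_conj (hS : S.PosSemidef) (Q : Matrix (Fin t) (Fin t) ℝ) :
    (1 + S * Q).det = (1 + hS.sqrt * Q * hS.sqrt).det := by
  have h := Matrix.det_one_add_mul_comm (hS.sqrt * Q) hS.sqrt
  rw [← Matrix.mul_assoc hS.sqrt hS.sqrt Q, hS.sqrt_mul_self] at h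
  exact h.symm

lemma det_one_add_pos (hS : S.PosSemidef) (hQ : Q.PosSemidef) : 0 < (1 + S * Q).det := by
  rw [det_eq_det_conj hS Q]
  exact (one_add_posDef (sqrt_conj_psd hS hQ)).det_pos

lemma inv_mul_S_eq (hS : S.PosSemidef) (hQ : Q.PosSemidef) :
    (1 + S * Q)⁻¹ * S = hS.sqrt * (1 + hS.sqrt * Q * hS.sqrt)⁻¹ * hS.sqrt := by
  set C := hS.sqrt with hC
  set B := 1 + C * Q * C with hBdef
  have hBpd : B.PosDef := one_add_posDef (sqrt_conj_psd hS hQ)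
  have hdetB : IsUnit B.det := hBpd.det_pos.ne'.isUnit
  have hdetA : IsUnit (1 + S * Q).det := (det_one_add_pos hS hQ).ne'.isUnit
  have key : (1 + S * Q) * C = C * B := by
    rw [hBdef, Matrix.add_mul, Matrix.mul_add, Matrix.one_mul, Matrix.mul_one]
    congr 1
    simp only [← Matrix.mul_assoc]
    rw [hS.sqrt_mul_self]
  have e : C * B⁻¹ = (1 + S * Q)⁻¹ * C := by
    have e1 : (1 + S * Q)⁻¹ * ((1 + S * Q) * C) * B⁻¹ = (1 + S * Q)⁻¹ * (C * B) * B⁻¹ := by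
      rw [key]
    rw [← Matrix.mul_assoc, ← Matrix.mul_assoc, Matrix.nonsing_inv_mul _ hdetA,
      Matrix.one_mul] at e1
    rw [Matrix.mul_assoc ((1 + S * Q)⁻¹ * C) B B⁻¹, Matrix.mul_nonsing_inv _ hdetB,
      Matrix.mul_one] at e1
    exact e1
  calc (1 + S * Q)⁻¹ * S = (1 + S * Q)⁻¹ * (C * C) := by rw [hC, hS.sqrt_mul_self]
    _ = ((1 + S * Q)⁻¹ * C) * C := by rw [Matrix.mul_assoc]
    _ = C * B⁻¹ * C := by rw [e]

lemma trace_conj_form (hS : S.PosSemidef) (hQ : Q.PosSemidef) (M : Matrix (Fin t) (Fin t) ℝ) :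
    ((1 + S * Q)⁻¹ * S * M).trace
      = ((1 + hS.sqrt * Q * hS.sqrt)⁻¹ * (hS.sqrt * M * hS.sqrt)).trace := by
  rw [inv_mul_S_eq hS hQ]
  set C := hS.sqrt
  set B := 1 + C * Q * C
  calc (C * B⁻¹ * C * M).trace = (C * (B⁻¹ * (C * M))).trace := by
        simp only [Matrix.mul_assoc]
    _ = ((B⁻¹ * (C * M)) * C).trace := Matrix.trace_mul_comm _ _
    _ = (B⁻¹ * (C * M * C)).trace := by simp only [Matrix.mul_assoc]

lemma trace_bound (hS : S.PosSemidef) (hQ : Q.PosSemidef) (M : Matrix (Fin t) (Fin t) ℝ) :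
    |((1 + S * Q)⁻¹ * S * M).trace| ≤ L S * L M := by
  classical
  rw [trace_conj_form hS hQ M]
  set C := hS.sqrt with hC
  set R := C * Q * C with hR
  have hRpsd : R.PosSemidef := sqrt_conj_psd hS hQ
  have hBpd : (1 + R).PosDef := one_add_posDef hRpsd
  set B := 1 + R with hBdef
  -- P = C * B⁻¹ * C is PSD with trace ≤ L S
  have hBinvPsd : (B⁻¹).PosSemidef := hBpd.inv.posSemidef
  have hP : (C * B⁻¹ * C).PosSemidef := by
    have := hBinvPsd.mul_mul_conjTranspose_same C
    rwa [hS.posSemidef_sqrt.1] at this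
  set P := C * B⁻¹ * C with hPdef
  have htr : (B⁻¹ * (C * M * C)).trace = (P * M).trace := by
    calc (B⁻¹ * (C * M * C)).trace = ((B⁻¹ * (C * M)) * C).trace := by
          simp only [Matrix.mul_assoc]
      _ = (C * (B⁻¹ * (C * M))).trace := (Matrix.trace_mul_comm _ _).symm
      _ = (P * M).trace := by simp only [hPdef, Matrix.mul_assoc]
  have hPtr : P.trace ≤ L S := by
    have e : P.trace = (B⁻¹ * (C * C)).trace := by
      calc P.trace = (C * (B⁻¹ * C)).trace := by simp only [hPdef, Matrix.mul_assoc]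
        _ = ((B⁻¹ * C) * C).trace := Matrix.trace_mul_comm _ _
        _ = (B⁻¹ * (C * C)).trace := by simp only [Matrix.mul_assoc]
    rw [e, hC, hS.sqrt_mul_self, trace_mul_expand]
    calc ∑ i, ∑ k, B⁻¹ i k * S k i ≤ ∑ i, ∑ k, |S k i| := by
          refine Finset.sum_le_sum fun i _ => Finset.sum_le_sum fun k _ => ?_
          calc B⁻¹ i k * S k i ≤ |B⁻¹ i k * S k i| := le_abs_self _
            _ = |B⁻¹ i k| * |S k i| := abs_mul _ _
            _ ≤ 1 * |S k i| := by
                have := inv_entry_abs_le_one hRpsd i k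
                rw [← hBdef] at this
                exact mul_le_mul_of_nonneg_right this (abs_nonneg _)
            _ = |S k i| := one_mul _
      _ = L S := by rw [L, Finset.sum_comm]
  rw [htr, trace_mul_expand]
  calc |∑ i, ∑ k, P i k * M k i| ≤ ∑ i, ∑ k, |P i k * M k i| := by
        refine (Finset.abs_sum_le_sum_abs _ _).trans (Finset.sum_le_sum fun i _ => ?_)
        exact Finset.abs_sum_le_sum_abs _ _
    _ ≤ ∑ i, ∑ k, P.trace * |M k i| := by
        refine Finset.sum_le_sum fun i _ => Finset.sum_le_sum fun k _ => ?_
        rw [abs_mul]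
        exact mul_le_mul_of_nonneg_right (psd_abs_entry_le hP i k) (abs_nonneg _)
    _ = P.trace * L M := by
        simp only [L, Finset.mul_sum]
        rw [Finset.sum_comm]
    _ ≤ L S * L M := mul_le_mul_of_nonneg_right hPtr (L_nonneg M)

lemma logdet_nonneg (hS : S.PosSemidef) (hQ : Q.PosSemidef) :
    0 ≤ Real.log (1 + S * Q).det := by
  rw [det_eq_det_conj hS Q]
  have hRpsd := sqrt_conj_psd hS hQ
  set R := hS.sqrt * Q * hS.sqrt
  have hBpd : (1 + R).PosDef := one_add_posDef hRpsd
  have h1 : Real.log ((1 + R)⁻¹).det ≤ ((1 + R)⁻¹).trace - t := logdet_le hBpd.inv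
  have h2 : ((1 + R)⁻¹).trace ≤ t := inv_trace_le hRpsd
  have h3 : ((1 + R)⁻¹).det = ((1 + R).det)⁻¹ := by
    rw [Matrix.det_nonsing_inv, Ring.inverse_eq_inv']
  rw [h3, Real.log_inv] at h1
  linarith

lemma logdet_le_LS (hS : S.PosSemidef) (hQ : Q.PosSemidef) :
    Real.log (1 + S * Q).det ≤ L S * L Q := by
  rw [det_eq_det_conj hS Q]
  have hRpsd := sqrt_conj_psd hS hQ
  set C := hS.sqrt with hC
  set R := C * Q * C with hRdef
  have hBpd : (1 + R).PosDef := one_add_posDef hRpsd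
  have h1 : Real.log (1 + R).det ≤ (1 + R).trace - t := logdet_le hBpd
  have h2 : (1 + R).trace = t + R.trace := by
    rw [Matrix.trace_add, Matrix.trace_one]
    simp
  have h3 : R.trace = (S * Q).trace := by
    calc R.trace = (C * (Q * C)).trace := by simp only [hRdef, Matrix.mul_assoc]
      _ = ((Q * C) * C).trace := Matrix.trace_mul_comm _ _
      _ = (Q * (C * C)).trace := by simp only [Matrix.mul_assoc]
      _ = (Q * S).trace := by rw [hC, hS.sqrt_mul_self]
      _ = (S * Q).trace := Matrix.trace_mul_comm _ _
  have h4 : (S * Q).trace ≤ L S * L Q := by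
    rw [trace_mul_expand]
    calc ∑ i, ∑ k, S i k * Q k i ≤ ∑ i, ∑ k, |S i k| * L Q := by
          refine Finset.sum_le_sum fun i _ => Finset.sum_le_sum fun k _ => ?_
          calc S i k * Q k i ≤ |S i k * Q k i| := le_abs_self _
            _ = |S i k| * |Q k i| := abs_mul _ _
            _ ≤ |S i k| * L Q := mul_le_mul_of_nonneg_left (entry_abs_le_L Q k i) (abs_nonneg _)
      _ = L S * L Q := by simp only [L, Finset.sum_mul]
  linarith

lemma trace_SQ_nonneg (hS : S.PosSemidef) (hQ : Q.PosSemidef) :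
    0 ≤ ((1 + S * Q)⁻¹ * S * Q).trace := by
  rw [trace_conj_form hS hQ Q]
  have hRpsd := sqrt_conj_psd hS hQ
  exact psd_trace_mul_nonneg (one_add_posDef hRpsd).inv.posSemidef hRpsd


end SQ

lemma logdet_diff_le {X Y : Matrix (Fin t) (Fin t) ℝ} (hX : X.PosDef) (hY : Y.PosDef) :
    Real.log X.det - Real.log Y.det ≤ (Y⁻¹ * X).trace - t := by
  classical
  have hYinv : Y⁻¹.PosDef := hY.inv
  set C := hYinv.posSemidef.sqrt with hCdef
  have hCC : C * C = Y⁻¹ := hYinv.posSemidef.sqrt_mul_self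
  have hCsymm : Cᵀ = C := herm_transpose hYinv.posSemidef.posSemidef_sqrt.1
  have hCH : Cᴴ = C := hYinv.posSemidef.posSemidef_sqrt.1
  have hdetC : C.det ≠ 0 := by
    intro h0
    have : (C * C).det = 0 := by rw [Matrix.det_mul, h0, mul_zero]
    rw [hCC] at this
    exact hYinv.det_pos.ne' this
  have hCinj : ∀ x : Fin t → ℝ, C *ᵥ x = 0 → x = 0 := by
    intro x hx0
    have h1 : (Y * (C * C)) *ᵥ x = Y *ᵥ (C *ᵥ (C *ᵥ x)) := by
      rw [← Matrix.mulVec_mulVec, ← Matrix.mulVec_mulVec]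
    have h2 : Y * (C * C) = 1 := by
      rw [hCC, Matrix.mul_nonsing_inv _ hY.det_pos.ne'.isUnit]
    rw [h2, Matrix.one_mulVec, hx0, Matrix.mulVec_zero, Matrix.mulVec_zero] at h1
    exact h1
  -- W = C X C is posdef
  have hW : (C * X * C).PosDef := by
    refine Matrix.PosDef.of_dotProduct_mulVec_pos ?_ ?_
    · show (C * X * C)ᴴ = C * X * C
      rw [Matrix.conjTranspose_mul, Matrix.conjTranspose_mul, hCH, hX.1]
      simp only [Matrix.mul_assoc]
    · intro x hx
      have hCx : C *ᵥ x ≠ 0 := fun h => hx (hCinj x h)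
      have := hX.dotProduct_mulVec_pos hCx
      simp only [star_trivial] at this ⊢
      have e : x ⬝ᵥ ((C * X * C) *ᵥ x) = (C *ᵥ x) ⬝ᵥ (X *ᵥ (C *ᵥ x)) := by
        rw [← Matrix.mulVec_mulVec, ← Matrix.mulVec_mulVec, Matrix.dotProduct_mulVec x C,
          ← Matrix.mulVec_transpose, hCsymm]
      rw [e]
      exact this
  have h1 : Real.log (C * X * C).det ≤ (C * X * C).trace - t := logdet_le hW
  have hdet : (C * X * C).det = X.det * Y⁻¹.det := by
    rw [Matrix.det_mul, Matrix.det_mul, ← hCC, Matrix.det_mul]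
    ring
  have htr : (C * X * C).trace = (Y⁻¹ * X).trace := by
    rw [← trace_conj_comm X C, hCC, Matrix.trace_mul_comm]
  have hdetYinv : Y⁻¹.det = (Y.det)⁻¹ := by
    rw [Matrix.det_nonsing_inv, Ring.inverse_eq_inv']
  rw [hdet, htr, hdetYinv, Real.log_mul hX.det_pos.ne' (inv_ne_zero hY.det_pos.ne'),
    Real.log_inv] at h1
  linarith

lemma concavity {S Q₁ Q₂ : Matrix (Fin t) (Fin t) ℝ} (hS : S.PosSemidef)
    (hQ1 : Q₁.PosSemidef) (hQ2 : Q₂.PosSemidef) :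
    ((1 + S * Q₂)⁻¹ * S * (Q₂ - Q₁)).trace
      ≤ Real.log (1 + S * Q₂).det - Real.log (1 + S * Q₁).det := by
  classical
  set C := hS.sqrt with hCdef
  set R₁ := C * Q₁ * C with hR1
  set R₂ := C * Q₂ * C with hR2
  have hX : (1 + R₁).PosDef := one_add_posDef (sqrt_conj_psd hS hQ1)
  have hY : (1 + R₂).PosDef := one_add_posDef (sqrt_conj_psd hS hQ2)
  have key := logdet_diff_le hX hY
  have hYdet : IsUnit (1 + R₂).det := hY.det_pos.ne'.isUnit
  -- trace identity : tr (Y⁻¹ X) - t = tr (Y⁻¹ (R₁ - R₂))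
  have htr1 : ((1 + R₂)⁻¹ * (1 + R₁)).trace - t
      = ((1 + R₂)⁻¹ * R₁).trace - ((1 + R₂)⁻¹ * R₂).trace := by
    have e1 : ((1 + R₂)⁻¹ * (1 + R₁)).trace
        = ((1 + R₂)⁻¹).trace + ((1 + R₂)⁻¹ * R₁).trace := by
      rw [Matrix.mul_add, Matrix.trace_add, Matrix.mul_one]
    have e2 : ((1 + R₂)⁻¹ * (1 + R₂)).trace = t := by
      rw [Matrix.nonsing_inv_mul _ hYdet, Matrix.trace_one]; simp
    have e2' : ((1 + R₂)⁻¹ * (1 + R₂)).trace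
        = ((1 + R₂)⁻¹).trace + ((1 + R₂)⁻¹ * R₂).trace := by
      rw [Matrix.mul_add, Matrix.trace_add, Matrix.mul_one]
    linarith
  -- conj trace form with M = Q₂ - Q₁
  have hform := trace_conj_form hS hQ2 (Q₂ - Q₁)
  have hMconj : C * (Q₂ - Q₁) * C = R₂ - R₁ := by
    rw [Matrix.mul_sub, Matrix.sub_mul]
  rw [hMconj] at hform
  have hsub : ((1 + R₂)⁻¹ * (R₂ - R₁)).trace
      = ((1 + R₂)⁻¹ * R₂).trace - ((1 + R₂)⁻¹ * R₁).trace := by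
    rw [Matrix.mul_sub, Matrix.trace_sub]
  rw [det_eq_det_conj hS Q₁, det_eq_det_conj hS Q₂, ← hR1, ← hR2]
  rw [hform, hsub]
  linarith


section MeasTend

open Filter

variable {Ω : Type*} [MeasurableSpace Ω] {ι : Type*} {l : Filter ι}

lemma meas_det {A : Ω → Matrix (Fin t) (Fin t) ℝ}
    (h : ∀ i j, Measurable fun ω => A ω i j) : Measurable fun ω => (A ω).det := by
  simp only [Matrix.det_apply']
  refine Finset.measurable_sum _ fun σ _ => ?_
  exact (Finset.measurable_prod _ fun i _ => h (σ i) i).const_mul _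

lemma meas_adjugate {A : Ω → Matrix (Fin t) (Fin t) ℝ}
    (h : ∀ i j, Measurable fun ω => A ω i j) (i j : Fin t) :
    Measurable fun ω => (A ω).adjugate i j := by
  classical
  simp only [Matrix.adjugate_apply]
  refine meas_det fun a b => ?_
  simp only [Matrix.updateRow_apply]
  by_cases hab : a = j
  · simp [hab]
  · simpa [hab] using h a b

lemma meas_inv {A : Ω → Matrix (Fin t) (Fin t) ℝ}
    (h : ∀ i j, Measurable fun ω => A ω i j) (i j : Fin t) :
    Measurable fun ω => (A ω)⁻¹ i j := by
  simp only [Matrix.inv_def, Matrix.smul_apply, smul_eq_mul, Ring.inverse_eq_inv']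
  exact ((meas_det h).inv).mul (meas_adjugate h i j)

lemma meas_mul {A B : Ω → Matrix (Fin t) (Fin t) ℝ}
    (hA : ∀ i j, Measurable fun ω => A ω i j) (hB : ∀ i j, Measurable fun ω => B ω i j)
    (i j : Fin t) : Measurable fun ω => (A ω * B ω) i j := by
  simp only [Matrix.mul_apply]
  exact Finset.measurable_sum _ fun k _ => (hA i k).mul (hB k j)

lemma meas_trace {A : Ω → Matrix (Fin t) (Fin t) ℝ}
    (h : ∀ i j, Measurable fun ω => A ω i j) : Measurable fun ω => (A ω).trace := by
  simp only [Matrix.trace, Matrix.diag]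
  exact Finset.measurable_sum _ fun i _ => h i i

lemma tend_det {A : ι → Matrix (Fin t) (Fin t) ℝ} {A₀ : Matrix (Fin t) (Fin t) ℝ}
    (h : ∀ i j, Tendsto (fun s => A s i j) l (nhds (A₀ i j))) :
    Tendsto (fun s => (A s).det) l (nhds A₀.det) := by
  simp only [Matrix.det_apply']
  refine tendsto_finset_sum _ fun σ _ => ?_
  exact (tendsto_finset_prod _ fun i _ => h (σ i) i).const_mul _

lemma tend_adjugate {A : ι → Matrix (Fin t) (Fin t) ℝ} {A₀ : Matrix (Fin t) (Fin t) ℝ}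
    (h : ∀ i j, Tendsto (fun s => A s i j) l (nhds (A₀ i j))) (i j : Fin t) :
    Tendsto (fun s => (A s).adjugate i j) l (nhds (A₀.adjugate i j)) := by
  classical
  simp only [Matrix.adjugate_apply]
  refine tend_det fun a b => ?_
  simp only [Matrix.updateRow_apply]
  by_cases hab : a = j
  · simp only [hab, if_true]
    exact tendsto_const_nhds
  · simpa [hab] using h a b

lemma tend_inv {A : ι → Matrix (Fin t) (Fin t) ℝ} {A₀ : Matrix (Fin t) (Fin t) ℝ}
    (h : ∀ i j, Tendsto (fun s => A s i j) l (nhds (A₀ i j))) (hdet : A₀.det ≠ 0)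
    (i j : Fin t) : Tendsto (fun s => (A s)⁻¹ i j) l (nhds (A₀⁻¹ i j)) := by
  simp only [Matrix.inv_def, Matrix.smul_apply, smul_eq_mul, Ring.inverse_eq_inv']
  exact ((tend_det h).inv₀ hdet).mul (tend_adjugate h i j)

lemma tend_mul {A B : ι → Matrix (Fin t) (Fin t) ℝ} {A₀ B₀ : Matrix (Fin t) (Fin t) ℝ}
    (hA : ∀ i j, Tendsto (fun s => A s i j) l (nhds (A₀ i j)))
    (hB : ∀ i j, Tendsto (fun s => B s i j) l (nhds (B₀ i j))) (i j : Fin t) :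
    Tendsto (fun s => (A s * B s) i j) l (nhds ((A₀ * B₀) i j)) := by
  simp only [Matrix.mul_apply]
  exact tendsto_finset_sum _ fun k _ => (hA i k).mul (hB k j)

lemma tend_trace {A : ι → Matrix (Fin t) (Fin t) ℝ} {A₀ : Matrix (Fin t) (Fin t) ℝ}
    (h : ∀ i j, Tendsto (fun s => A s i j) l (nhds (A₀ i j))) :
    Tendsto (fun s => (A s).trace) l (nhds A₀.trace) := by
  simp only [Matrix.trace, Matrix.diag]
  exact tendsto_finset_sum _ fun i _ => h i i

end MeasTend


lemma entry_le_frobenius (A : Matrix (Fin t) (Fin t) ℝ) (i j : Fin t) : |A i j| ≤ ‖A‖ := by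
  rw [Matrix.frobenius_norm_def, ← Real.sqrt_eq_rpow, ← Real.sqrt_sq_eq_abs]
  apply Real.sqrt_le_sqrt
  have h2 : ∀ a b : Fin t, ‖A a b‖ ^ (2:ℝ) = A a b ^ 2 := by
    intro a b
    rw [show (2:ℝ) = ((2:ℕ):ℝ) by norm_num, Real.rpow_natCast]
    simp [sq_abs, Real.norm_eq_abs]
  calc A i j ^ 2 ≤ ∑ b, A i b ^ 2 :=
        Finset.single_le_sum (f := fun b => A i b ^ 2) (fun b _ => sq_nonneg _)
          (Finset.mem_univ j)
    _ ≤ ∑ a, ∑ b, A a b ^ 2 :=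
        Finset.single_le_sum (f := fun a => ∑ b, A a b ^ 2)
          (fun a _ => Finset.sum_nonneg fun b _ => sq_nonneg _) (Finset.mem_univ i)
    _ = ∑ a, ∑ b, ‖A a b‖ ^ (2:ℝ) := by
        refine Finset.sum_congr rfl fun a _ => Finset.sum_congr rfl fun b _ => (h2 a b).symm

lemma L_le_frobenius (A : Matrix (Fin t) (Fin t) ℝ) : L A ≤ (t:ℝ)^2 * ‖A‖ := by
  have : L A ≤ ∑ _i : Fin t, ∑ _j : Fin t, ‖A‖ :=
    Finset.sum_le_sum fun i _ => Finset.sum_le_sum fun j _ => entry_le_frobenius A i j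
  calc L A ≤ ∑ _i : Fin t, ∑ _j : Fin t, ‖A‖ := this
    _ = (t:ℝ)^2 * ‖A‖ := by
        simp [Finset.sum_const, Finset.card_univ, nsmul_eq_mul]; ring

lemma psd_gram (T : Matrix (Fin t) (Fin t) ℝ) : (Tᵀ * T).PosSemidef := by
  have := posSemidef_conjTranspose_mul_self (R := ℝ) T
  rwa [Matrix.conjTranspose_eq_transpose_of_trivial] at this

section Integr

variable {Ω : Type*} [MeasurableSpace Ω] {Pr : Measure Ω}
variable {S : Ω → Matrix (Fin t) (Fin t) ℝ}

lemma meas_S_entries (hS_meas : Measurable S) (i j : Fin t) :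
    Measurable fun ω => S ω i j :=
  (measurable_pi_apply j).comp ((measurable_pi_apply i).comp hS_meas)

lemma integrable_L (hS_meas : Measurable S) (hS_int : Integrable (fun ω => ‖S ω‖) Pr) :
    Integrable (fun ω => L (S ω)) Pr := by
  refine Integrable.mono' (hS_int.const_mul ((t:ℝ)^2)) ?_ ?_
  · refine Measurable.aestronglyMeasurable ?_
    simp only [L]
    exact Finset.measurable_sum _ fun i _ => Finset.measurable_sum _ fun j _ =>
      (meas_S_entries hS_meas i j).abs
  · exact Filter.Eventually.of_forall fun ω => by
      rw [Real.norm_eq_abs, abs_of_nonneg (L_nonneg _)]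
      exact L_le_frobenius _

lemma meas_one_add_mul (hS_meas : Measurable S) (Q' : Matrix (Fin t) (Fin t) ℝ) (i j : Fin t) :
    Measurable fun ω => (1 + S ω * Q') i j := by
  simp only [Matrix.add_apply, Matrix.mul_apply, Matrix.one_apply]
  exact measurable_const.add <| Finset.measurable_sum _ fun k _ =>
    (meas_S_entries hS_meas i k).mul_const _

lemma meas_trace_integrand (hS_meas : Measurable S) (Q' M : Matrix (Fin t) (Fin t) ℝ) :
    Measurable fun ω => ((1 + S ω * Q')⁻¹ * S ω * M).trace := by
  refine meas_trace (meas_mul (meas_mul (meas_inv (meas_one_add_mul hS_meas Q'))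
    (meas_S_entries hS_meas)) fun i j => measurable_const)

lemma integrable_trace_integrand (hS_meas : Measurable S)
    (hS_psd : ∀ᵐ ω ∂Pr, (S ω).PosSemidef)
    (hLint : Integrable (fun ω => L (S ω)) Pr)
    {Q' : Matrix (Fin t) (Fin t) ℝ} (hQ' : Q'.PosSemidef) (M : Matrix (Fin t) (Fin t) ℝ) :
    Integrable (fun ω => ((1 + S ω * Q')⁻¹ * S ω * M).trace) Pr := by
  refine Integrable.mono' (hLint.mul_const (L M))
    (meas_trace_integrand hS_meas Q' M).aestronglyMeasurable ?_
  filter_upwards [hS_psd] with ω hω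
  rw [Real.norm_eq_abs]
  exact trace_bound hω hQ' M

lemma meas_logdet (hS_meas : Measurable S) (Q' : Matrix (Fin t) (Fin t) ℝ) :
    Measurable fun ω => Real.log (1 + S ω * Q').det :=
  Real.measurable_log.comp (meas_det (meas_one_add_mul hS_meas Q'))

lemma integrable_logdet (hS_meas : Measurable S)
    (hS_psd : ∀ᵐ ω ∂Pr, (S ω).PosSemidef)
    (hLint : Integrable (fun ω => L (S ω)) Pr)
    {Q' : Matrix (Fin t) (Fin t) ℝ} (hQ' : Q'.PosSemidef) :
    Integrable (fun ω => Real.log (1 + S ω * Q').det) Pr := by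
  refine Integrable.mono' (hLint.mul_const (L Q'))
    (meas_logdet hS_meas Q').aestronglyMeasurable ?_
  filter_upwards [hS_psd] with ω hω
  rw [Real.norm_eq_abs, abs_of_nonneg (logdet_nonneg hω hQ')]
  exact logdet_le_LS hω hQ'

end Integr


lemma L_neg (A : Matrix (Fin t) (Fin t) ℝ) : L (-A) = L A := by
  simp [L]

section Master

variable {Ω : Type*} [MeasurableSpace Ω]

lemma master (Pr : Measure Ω) [IsProbabilityMeasure Pr]
    (S : Ω → Matrix (Fin t) (Fin t) ℝ) (hS_meas : Measurable S)
    (hS_psd : ∀ᵐ ω ∂Pr, (S ω).PosSemidef)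
    (hLint : Integrable (fun ω => L (S ω)) Pr)
    (T : Matrix (Fin t) (Fin t) ℝ) (hT : CholeskyFeasible T)
    (hmax : ∀ T' : Matrix (Fin t) (Fin t) ℝ, CholeskyFeasible T' →
      (∫ ω, Real.log ((1 + S ω * (T'ᵀ * T')).det) ∂Pr)
        ≤ ∫ ω, Real.log ((1 + S ω * (Tᵀ * T)).det) ∂Pr)
    (D : Matrix (Fin t) (Fin t) ℝ) (hDut : ∀ i j : Fin t, j < i → D i j = 0)
    (hDdiag : ∀ i : Fin t, T i i = 0 → 0 ≤ D i i)
    (c : ℝ)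
    (hc : c = ∑ p ∈ Finset.univ.filter (fun p : Fin t × Fin t => p.1 ≤ p.2),
      T p.1 p.2 * D p.1 p.2) :
    (∫ ω, ((1 + S ω * (Tᵀ * T))⁻¹ * S ω
        * (Dᵀ * T + Tᵀ * D - (2 * c) • (Tᵀ * T))).trace ∂Pr) ≤ 0 := by
  classical
  have hQpsd : (Tᵀ * T).PosSemidef := psd_gram T
  set l : Filter ℝ := nhdsWithin 0 (Set.Ioi 0) with hl
  set Q : Matrix (Fin t) (Fin t) ℝ := Tᵀ * T with hQ
  set d : ℝ := ∑ p ∈ Finset.univ.filter (fun p : Fin t × Fin t => p.1 ≤ p.2),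
    D p.1 p.2 ^ 2 with hd
  set N2 : ℝ → ℝ := fun s => 1 + 2*c*s + d*s^2 with hN2
  set TT : ℝ → Matrix (Fin t) (Fin t) ℝ :=
    fun s => (Real.sqrt (N2 s))⁻¹ • (T + s • D) with hTT
  set QQ : ℝ → Matrix (Fin t) (Fin t) ℝ := fun s => (TT s)ᵀ * TT s with hQQ
  set G : ℝ → Matrix (Fin t) (Fin t) ℝ := fun s => (T + s • D)ᵀ * (T + s • D) with hG
  set A₁ : Matrix (Fin t) (Fin t) ℝ := Dᵀ * T + Tᵀ * D with hA₁
  set A₂ : Matrix (Fin t) (Fin t) ℝ := Dᵀ * D with hA₂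
  set W : ℝ → Matrix (Fin t) (Fin t) ℝ :=
    fun s => A₁ + s • A₂ - (2*c + s*d) • Q with hW
  set Dtil : Matrix (Fin t) (Fin t) ℝ := A₁ - (2 * c) • Q with hDtil
  set K : ℝ := 2 * (L A₁ + L A₂ + (2*|c| + |d|) * L Q) with hK
  -- entries of TT
  have hTTent : ∀ s : ℝ, ∀ i j : Fin t,
      TT s i j = (Real.sqrt (N2 s))⁻¹ * (T i j + s * D i j) := by
    intro s i j
    rw [hTT]
    simp [Matrix.smul_apply, Matrix.add_apply]
  -- sum of squares identity
  have hsumN2 : ∀ s : ℝ, ∑ p ∈ Finset.univ.filter (fun p : Fin t × Fin t => p.1 ≤ p.2),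
      (T p.1 p.2 + s * D p.1 p.2)^2 = N2 s := by
    intro s
    have e : ∀ p ∈ Finset.univ.filter (fun p : Fin t × Fin t => p.1 ≤ p.2),
        (T p.1 p.2 + s * D p.1 p.2)^2
          = T p.1 p.2^2 + ((2*s) * (T p.1 p.2 * D p.1 p.2) + (s^2) * D p.1 p.2^2) :=
      fun p _ => by ring
    rw [Finset.sum_congr rfl e, Finset.sum_add_distrib, Finset.sum_add_distrib,
      ← Finset.mul_sum, ← Finset.mul_sum, hT.2.2, ← hc, ← hd, hN2]
    ring
  -- G expansion
  have hGexp : ∀ s : ℝ, G s = Q + s • A₁ + (s*s) • A₂ := by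
    intro s
    rw [hG, hQ, hA₁, hA₂]
    ext i j
    simp [Matrix.mul_apply, Matrix.add_apply, Matrix.smul_apply, Matrix.transpose_apply,
      Finset.mul_sum, Finset.sum_add_distrib]
    rw [← Finset.sum_add_distrib, ← Finset.sum_add_distrib, ← Finset.sum_add_distrib]
    refine Finset.sum_congr rfl fun k _ => by ring
  -- QQ as scalar multiple of G
  have hQQform : ∀ s : ℝ, 0 ≤ N2 s → QQ s = (N2 s)⁻¹ • G s := by
    intro s hs
    rw [hQQ, hTT, hG]
    simp only [Matrix.transpose_smul, Matrix.smul_mul, Matrix.mul_smul, smul_smul]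
    congr 1
    rw [← mul_inv, Real.mul_self_sqrt hs]
  -- feasibility of TT s (eventually)
  have hN2tend : Filter.Tendsto N2 l (nhds 1) := by
    have hcont : Continuous N2 := by rw [hN2]; fun_prop
    have h0 := hcont.tendsto 0
    have hval : N2 0 = 1 := by rw [hN2]; norm_num
    rw [hval] at h0
    exact h0.mono_left nhdsWithin_le_nhds
  have hev_half : ∀ᶠ s in l, 1/2 < N2 s :=
    hN2tend.eventually (eventually_gt_nhds (by norm_num))
  have hev_mem : ∀ᶠ s in l, s ∈ Set.Ioc (0:ℝ) 1 :=
    Ioc_mem_nhdsGT_of_mem ⟨le_refl 0, one_pos⟩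
  have hev_diag : ∀ᶠ s in l, ∀ i : Fin t, 0 ≤ T i i + s * D i i := by
    rw [Filter.eventually_all]
    intro i
    rcases eq_or_lt_of_le (hT.2.1 i) with heq | hlt
    · have hDi := hDdiag i heq.symm
      filter_upwards [self_mem_nhdsWithin] with s hs
      have hs' : (0:ℝ) < s := hs
      rw [← heq, zero_add]
      exact mul_nonneg hs'.le hDi
    · have hco : Continuous fun s : ℝ => T i i + s * D i i := by fun_prop
      have h0 := hco.tendsto 0
      have hval : T i i + 0 * D i i = T i i := by ring
      rw [hval] at h0
      exact ((h0.mono_left nhdsWithin_le_nhds).eventually (eventually_ge_nhds hlt))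
  have hev_feas : ∀ᶠ s in l, CholeskyFeasible (TT s) := by
    filter_upwards [hev_half, hev_diag] with s hhalf hdiag
    have hpos : 0 < N2 s := lt_trans (by norm_num) hhalf
    refine ⟨?_, ?_, ?_⟩
    · intro i j hij
      rw [hTTent s i j, hT.1 i j hij, hDut i j hij]
      ring
    · intro i
      rw [hTTent s i i]
      exact mul_nonneg (inv_nonneg.mpr (Real.sqrt_nonneg _)) (hdiag i)
    · have e : ∀ p ∈ Finset.univ.filter (fun p : Fin t × Fin t => p.1 ≤ p.2),
          (TT s p.1 p.2)^2 = (Real.sqrt (N2 s))⁻¹^2 * (T p.1 p.2 + s * D p.1 p.2)^2 :=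
        fun p _ => by rw [hTTent s p.1 p.2]; ring
      rw [Finset.sum_congr rfl e, ← Finset.mul_sum, hsumN2 s, inv_pow,
        Real.sq_sqrt hpos.le]
      exact inv_mul_cancel₀ hpos.ne'
  -- the difference-quotient matrices
  have hMs : ∀ s : ℝ, 0 < s → 0 < N2 s → s⁻¹ • (QQ s - Q) = (N2 s)⁻¹ • W s := by
    intro s hs hN2pos
    have hsne : s ≠ 0 := hs.ne'
    have hNne : N2 s ≠ 0 := hN2pos.ne'
    simp only [hN2] at hNne
    rw [hQQform s hN2pos.le, hGexp s]
    ext i j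
    simp only [hN2, hW, Matrix.smul_apply, Matrix.sub_apply, Matrix.add_apply, smul_eq_mul]
    field_simp
    have hN' : (1 + s*c*2 + s^2*d) ≠ 0 := by intro h; apply hNne; linarith
    have hX : (1 + s*c*2 + s^2*d) * (1 + s*c*2 + s^2*d)⁻¹ = 1 := mul_inv_cancel₀ hN'
    linear_combination (Q i j) * hX
  -- L-bound on the difference quotients
  have hLW : ∀ s : ℝ, 0 < s → s ≤ 1 → 1/2 < N2 s → L (s⁻¹ • (QQ s - Q)) ≤ K := by
    intro s hs hs1 hhalf
    have hN2pos : 0 < N2 s := lt_trans (by norm_num) hhalf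
    rw [hMs s hs hN2pos, L_smul]
    have h1 : L (W s) ≤ L A₁ + L A₂ + (2*|c| + |d|) * L Q := by
      have e1 : W s = A₁ + (s • A₂ + -((2*c + s*d) • Q)) := by
        simp only [hW]; abel
      rw [e1]
      refine (L_add _ _).trans ?_
      have h2 := (L_add (s • A₂) (-((2*c + s*d) • Q)))
      rw [L_neg, L_smul, L_smul] at h2
      have h3 : |s| * L A₂ ≤ L A₂ := by
        rw [abs_of_pos hs]
        nlinarith [L_nonneg A₂]
      have h4 : |2*c + s*d| * L Q ≤ (2*|c| + |d|) * L Q := by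
        have : |2*c + s*d| ≤ 2*|c| + |d| := by
          refine (abs_add_le _ _).trans ?_
          rw [abs_mul, abs_mul, abs_of_pos hs, abs_two]
          nlinarith [abs_nonneg d, hs.le, hs1]
        exact mul_le_mul_of_nonneg_right this (L_nonneg Q)
      linarith
    have h5 : |(N2 s)⁻¹| ≤ 2 := by
      rw [abs_of_pos (inv_pos.mpr hN2pos)]
      rw [inv_le_comm₀ hN2pos (by norm_num)]
      linarith
    calc |(N2 s)⁻¹| * L (W s) ≤ 2 * (L A₁ + L A₂ + (2*|c| + |d|) * L Q) := by
          have := L_nonneg (W s)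
          nlinarith
      _ = K := hK.symm
  -- per-s integral inequality
  have hkey : ∀ᶠ s in l,
      (∫ ω, ((1 + S ω * QQ s)⁻¹ * S ω * (s⁻¹ • (QQ s - Q))).trace ∂Pr) ≤ 0 := by
    filter_upwards [hev_feas, hev_mem] with s hfeas hmem
    have hQQpsd : (QQ s).PosSemidef := psd_gram _
    have hint1 : Integrable
        (fun ω => ((1 + S ω * QQ s)⁻¹ * S ω * (QQ s - Q)).trace) Pr :=
      integrable_trace_integrand hS_meas hS_psd hLint hQQpsd _
    have hint2 := integrable_logdet hS_meas hS_psd hLint hQQpsd (Pr := Pr)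
    have hint3 := integrable_logdet hS_meas hS_psd hLint hQpsd (Pr := Pr)
    have hptwise : ∀ᵐ ω ∂Pr, ((1 + S ω * QQ s)⁻¹ * S ω * (QQ s - Q)).trace
        ≤ Real.log (1 + S ω * QQ s).det - Real.log (1 + S ω * Q).det := by
      filter_upwards [hS_psd] with ω hω
      exact concavity hω hQpsd hQQpsd
    have h1 : (∫ ω, ((1 + S ω * QQ s)⁻¹ * S ω * (QQ s - Q)).trace ∂Pr)
        ≤ ∫ ω, (Real.log (1 + S ω * QQ s).det - Real.log (1 + S ω * Q).det) ∂Pr :=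
      integral_mono_ae hint1 (hint2.sub hint3) hptwise
    have h2 : (∫ ω, (Real.log (1 + S ω * QQ s).det - Real.log (1 + S ω * Q).det) ∂Pr)
        = (∫ ω, Real.log (1 + S ω * QQ s).det ∂Pr)
          - ∫ ω, Real.log (1 + S ω * Q).det ∂Pr := integral_sub hint2 hint3
    have h3 : (∫ ω, Real.log (1 + S ω * QQ s).det ∂Pr)
        ≤ ∫ ω, Real.log (1 + S ω * Q).det ∂Pr := by
      have := hmax (TT s) hfeas
      simpa only [hQQ, hQ] using this
    have h4 : (∫ ω, ((1 + S ω * QQ s)⁻¹ * S ω * (QQ s - Q)).trace ∂Pr) ≤ 0 := by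
      rw [h2] at h1
      linarith
    have e5 : (fun ω => ((1 + S ω * QQ s)⁻¹ * S ω * (s⁻¹ • (QQ s - Q))).trace)
        = fun ω => s⁻¹ * ((1 + S ω * QQ s)⁻¹ * S ω * (QQ s - Q)).trace := by
      funext ω
      rw [Matrix.mul_smul, Matrix.trace_smul, smul_eq_mul]
    rw [e5, MeasureTheory.integral_const_mul]
    have hsinv : (0:ℝ) ≤ s⁻¹ := inv_nonneg.mpr hmem.1.le
    exact mul_nonpos_of_nonneg_of_nonpos hsinv h4
  -- dominated convergence
  have htendQQ : ∀ i j : Fin t, Filter.Tendsto (fun s => QQ s i j) l (nhds (Q i j)) := by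
    intro i j
    have hGtend : Filter.Tendsto (fun s => G s i j) l (nhds (Q i j)) := by
      have hcont : Continuous fun s : ℝ => G s i j := by
        rw [hG]
        simp only [Matrix.mul_apply, Matrix.transpose_apply, Matrix.add_apply,
          Matrix.smul_apply]
        fun_prop
      have h0 := hcont.tendsto 0
      have hval : G 0 i j = Q i j := by rw [hGexp 0]; simp
      rw [hval] at h0
      exact h0.mono_left nhdsWithin_le_nhds
    have hmain : Filter.Tendsto (fun s => (N2 s)⁻¹ * G s i j) l (nhds (Q i j)) := by
      have := (hN2tend.inv₀ one_ne_zero).mul hGtend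
      simpa using this
    refine Filter.Tendsto.congr' ?_ hmain
    filter_upwards [hev_half] with s hhalf
    have hpos : 0 < N2 s := lt_trans (by norm_num) hhalf
    rw [hQQform s hpos.le]
    simp [Matrix.smul_apply]
  have hQQpsd : ∀ s : ℝ, (QQ s).PosSemidef := fun s => by
    simp only [hQQ]; exact psd_gram _
  -- entries of difference quotient tend to Dtil
  have htendMs : ∀ i j : Fin t,
      Filter.Tendsto (fun s => (s⁻¹ • (QQ s - Q)) i j) l (nhds (Dtil i j)) := by
    intro i j
    have hWtend : Filter.Tendsto (fun s => W s i j) l (nhds (Dtil i j)) := by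
      have hcont : Continuous fun s : ℝ => W s i j := by
        simp only [hW, Matrix.sub_apply, Matrix.add_apply, Matrix.smul_apply, smul_eq_mul]
        fun_prop
      have h0 := hcont.tendsto 0
      have hval : W 0 i j = Dtil i j := by
        simp only [hW, hDtil, Matrix.sub_apply, Matrix.add_apply, Matrix.smul_apply,
          smul_eq_mul]
        ring
      rw [hval] at h0
      exact h0.mono_left nhdsWithin_le_nhds
    have hmain : Filter.Tendsto (fun s => (N2 s)⁻¹ * W s i j) l (nhds (Dtil i j)) := by
      have := (hN2tend.inv₀ one_ne_zero).mul hWtend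
      simpa using this
    refine Filter.Tendsto.congr' ?_ hmain
    filter_upwards [hev_half, hev_mem] with s hhalf hmem
    have hpos : 0 < N2 s := lt_trans (by norm_num) hhalf
    rw [hMs s hmem.1 hpos]
    simp [Matrix.smul_apply]
  -- a.e. pointwise convergence of the integrand
  have hptw : ∀ᵐ ω ∂Pr, Filter.Tendsto
      (fun s => ((1 + S ω * QQ s)⁻¹ * S ω * (s⁻¹ • (QQ s - Q))).trace) l
      (nhds (((1 + S ω * Q)⁻¹ * S ω * Dtil).trace)) := by
    filter_upwards [hS_psd] with ω hω
    have hdet0 : (1 + S ω * Q).det ≠ 0 := (det_one_add_pos hω hQpsd).ne'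
    have hA : ∀ i j : Fin t, Filter.Tendsto (fun s => (1 + S ω * QQ s) i j) l
        (nhds ((1 + S ω * Q) i j)) := by
      intro i j
      simp only [Matrix.add_apply, Matrix.mul_apply, Matrix.one_apply]
      exact Filter.Tendsto.const_add _ (tendsto_finset_sum _ fun k _ =>
        (htendQQ k j).const_mul _)
    exact tend_trace (tend_mul (tend_mul (tend_inv hA hdet0)
      (fun i j => tendsto_const_nhds)) htendMs)
  -- dominated convergence
  have hbound : ∀ᶠ s in l, ∀ᵐ ω ∂Pr,
      ‖((1 + S ω * QQ s)⁻¹ * S ω * (s⁻¹ • (QQ s - Q))).trace‖ ≤ L (S ω) * K := by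
    filter_upwards [hev_half, hev_mem] with s hhalf hmem
    filter_upwards [hS_psd] with ω hω
    rw [Real.norm_eq_abs]
    calc |((1 + S ω * QQ s)⁻¹ * S ω * (s⁻¹ • (QQ s - Q))).trace|
        ≤ L (S ω) * L (s⁻¹ • (QQ s - Q)) := trace_bound hω (hQQpsd s) _
      _ ≤ L (S ω) * K :=
          mul_le_mul_of_nonneg_left (hLW s hmem.1 hmem.2 hhalf) (L_nonneg _)
  have hmeasF : ∀ᶠ s in l, AEStronglyMeasurable
      (fun ω => ((1 + S ω * QQ s)⁻¹ * S ω * (s⁻¹ • (QQ s - Q))).trace) Pr :=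
    Filter.Eventually.of_forall fun s =>
      (meas_trace_integrand hS_meas (QQ s) _).aestronglyMeasurable
  have hbint : Integrable (fun ω => L (S ω) * K) Pr := hLint.mul_const K
  haveI hNeBot : l.NeBot := by rw [hl]; infer_instance
  haveI hCG : l.IsCountablyGenerated := by rw [hl]; infer_instance
  have htendI : Filter.Tendsto
      (fun s => ∫ ω, ((1 + S ω * QQ s)⁻¹ * S ω * (s⁻¹ • (QQ s - Q))).trace ∂Pr) l
      (nhds (∫ ω, ((1 + S ω * Q)⁻¹ * S ω * Dtil).trace ∂Pr)) :=
    tendsto_integral_filter_of_dominated_convergence _ hmeasF hbound hbint hptw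
  exact le_of_tendsto htendI hkey

end Master

end CKTaux







/-- **Kuhn–Tucker stationarity conditions for the optimal Cholesky factor.**
If `T` maximizes `Ψ(T) = E[log det (I + S TᵀT)]` over feasible Cholesky factors, then
there is `μ ≥ 0` such that `E[tr((I + S TᵀT)⁻¹ S E^{(ij)})] = 2 μ T_{ij}` for `i < j`
and for diagonal entries with `T_{ii} > 0`, while
`E[tr((I + S TᵀT)⁻¹ S E^{(ii)})] ≤ 0` when `T_{ii} = 0`; here
`(E^{(ij)})_{mn} = T_{in} δ_{mj} + T_{im} δ_{nj}` is `∂(TᵀT)/∂T_{ij}`. -/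
theorem cholesky_kuhn_tucker
    (t : ℕ) (ht : 0 < t)
    {Ω : Type*} [MeasurableSpace Ω] (Pr : Measure Ω) [IsProbabilityMeasure Pr]
    (S : Ω → Matrix (Fin t) (Fin t) ℝ) (hS_meas : Measurable S)
    (hS_psd : ∀ᵐ ω ∂Pr, (S ω).PosSemidef)
    (hS_int : Integrable (fun ω => ‖S ω‖) Pr)
    (Ψ : Matrix (Fin t) (Fin t) ℝ → ℝ)
    (hΨ : ∀ T : Matrix (Fin t) (Fin t) ℝ,
      Ψ T = ∫ ω, Real.log ((1 + S ω * (Tᵀ * T)).det) ∂Pr)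
    (T : Matrix (Fin t) (Fin t) ℝ) (hT : CholeskyFeasible T)
    (E : Fin t → Fin t → Matrix (Fin t) (Fin t) ℝ)
    (hE : ∀ i j m n : Fin t,
      E i j m n = T i n * (if m = j then 1 else 0) + T i m * (if n = j then 1 else 0))
    (hmax : ∀ T' : Matrix (Fin t) (Fin t) ℝ, CholeskyFeasible T' → Ψ T' ≤ Ψ T) :
    ∃ μ : ℝ, 0 ≤ μ ∧
      (∀ i j : Fin t, i < j →
        (∫ ω, ((1 + S ω * (Tᵀ * T))⁻¹ * S ω * E i j).trace ∂Pr) = 2 * μ * T i j) ∧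
      (∀ i : Fin t, 0 < T i i →
        (∫ ω, ((1 + S ω * (Tᵀ * T))⁻¹ * S ω * E i i).trace ∂Pr) = 2 * μ * T i i) ∧
      (∀ i : Fin t, T i i = 0 →
        (∫ ω, ((1 + S ω * (Tᵀ * T))⁻¹ * S ω * E i i).trace ∂Pr) ≤ 0) := by
  classical
  have hQpsd : (Tᵀ * T).PosSemidef := CKTaux.psd_gram T
  have hLint : Integrable (fun ω => CKTaux.L (S ω)) Pr := CKTaux.integrable_L hS_meas hS_int
  have hmax' : ∀ T' : Matrix (Fin t) (Fin t) ℝ, CholeskyFeasible T' →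
      (∫ ω, Real.log ((1 + S ω * (T'ᵀ * T')).det) ∂Pr)
        ≤ ∫ ω, Real.log ((1 + S ω * (Tᵀ * T)).det) ∂Pr := by
    intro T' hT'
    have h := hmax T' hT'
    rwa [hΨ T', hΨ T] at h
  -- the elementary direction matrices
  set Dm : Fin t → Fin t → Matrix (Fin t) (Fin t) ℝ :=
    fun i j => Matrix.of fun a b => if a = i ∧ b = j then (1:ℝ) else 0 with hDm
  have hDmApp : ∀ i j a b : Fin t, Dm i j a b = if a = i ∧ b = j then (1:ℝ) else 0 :=
    fun i j a b => rfl
  have hDut : ∀ i j : Fin t, i ≤ j → ∀ a b : Fin t, b < a → Dm i j a b = 0 := by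
    intro i j hij a b hba
    rw [hDmApp]
    have : ¬(a = i ∧ b = j) := by
      rintro ⟨rfl, rfl⟩
      exact absurd hij (not_le.mpr hba)
    simp [this]
  have hDutNeg : ∀ i j : Fin t, i ≤ j → ∀ a b : Fin t, b < a → (-(Dm i j)) a b = 0 := by
    intro i j hij a b hba
    rw [Matrix.neg_apply, hDut i j hij a b hba, neg_zero]
  -- E in terms of Dm
  have hEeq : ∀ i j : Fin t,
      E i j = (Dm i j)ᵀ * T + Tᵀ * (Dm i j) := by
    intro i j
    have e1 : ∀ m n : Fin t, ((Dm i j)ᵀ * T) m n = T i n * (if m = j then 1 else 0) := by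
      intro m n
      rw [Matrix.mul_apply, Finset.sum_eq_single i]
      · rw [Matrix.transpose_apply, hDmApp]
        by_cases h : m = j <;> simp [h]
      · intro b _ hb
        rw [Matrix.transpose_apply, hDmApp]
        simp [hb]
      · simp
    have e2 : ∀ m n : Fin t, (Tᵀ * (Dm i j)) m n = T i m * (if n = j then 1 else 0) := by
      intro m n
      rw [Matrix.mul_apply, Finset.sum_eq_single i]
      · rw [Matrix.transpose_apply, hDmApp]
        by_cases h : n = j <;> simp [h, mul_comm]
      · intro b _ hb
        rw [Matrix.transpose_apply, hDmApp]
        simp [hb]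
      · simp
    ext m n
    rw [Matrix.add_apply, e1, e2, hE i j m n]
  -- value of the linear form c
  have hcval : ∀ i j : Fin t, i ≤ j →
      T i j = ∑ p ∈ Finset.univ.filter (fun p : Fin t × Fin t => p.1 ≤ p.2),
        T p.1 p.2 * (Dm i j) p.1 p.2 := by
    intro i j hij
    rw [Finset.sum_eq_single (i,j)]
    · rw [hDmApp]; simp
    · intro p _ hne
      have h0 : ¬(p.1 = i ∧ p.2 = j) := by
        intro hcon
        exact hne (Prod.ext hcon.1 hcon.2)
      rw [hDmApp]
      simp [h0]
    · intro hmem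
      exfalso
      apply hmem
      rw [Finset.mem_filter]
      exact ⟨Finset.mem_univ _, hij⟩
  have hcvalNeg : ∀ i j : Fin t, i ≤ j →
      -(T i j) = ∑ p ∈ Finset.univ.filter (fun p : Fin t × Fin t => p.1 ≤ p.2),
        T p.1 p.2 * (-(Dm i j)) p.1 p.2 := by
    intro i j hij
    have e : ∀ p ∈ Finset.univ.filter (fun p : Fin t × Fin t => p.1 ≤ p.2),
        T p.1 p.2 * (-(Dm i j)) p.1 p.2 = -(T p.1 p.2 * (Dm i j) p.1 p.2) := by
      intro p _
      rw [Matrix.neg_apply]; ring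
    rw [Finset.sum_congr rfl e, Finset.sum_neg_distrib, ← hcval i j hij]
  -- integrability and linearity of the gradient form
  have hint : ∀ M : Matrix (Fin t) (Fin t) ℝ,
      Integrable (fun ω => ((1 + S ω * (Tᵀ * T))⁻¹ * S ω * M).trace) Pr :=
    fun M => CKTaux.integrable_trace_integrand hS_meas hS_psd hLint hQpsd M
  have hsplit : ∀ (M : Matrix (Fin t) (Fin t) ℝ) (r : ℝ),
      (∫ ω, ((1 + S ω * (Tᵀ * T))⁻¹ * S ω * (M - r • (Tᵀ * T))).trace ∂Pr)
        = (∫ ω, ((1 + S ω * (Tᵀ * T))⁻¹ * S ω * M).trace ∂Pr)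
          - r * ∫ ω, ((1 + S ω * (Tᵀ * T))⁻¹ * S ω * (Tᵀ * T)).trace ∂Pr := by
    intro M r
    have e : (fun ω => ((1 + S ω * (Tᵀ * T))⁻¹ * S ω * (M - r • (Tᵀ * T))).trace)
        = fun ω => ((1 + S ω * (Tᵀ * T))⁻¹ * S ω * M).trace
            - r * ((1 + S ω * (Tᵀ * T))⁻¹ * S ω * (Tᵀ * T)).trace := by
      funext ω
      rw [Matrix.mul_sub, Matrix.mul_smul, Matrix.trace_sub, Matrix.trace_smul, smul_eq_mul]
    rw [e, integral_sub (hint M) (((hint (Tᵀ * T)).const_mul r)),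
      MeasureTheory.integral_const_mul]
  set μ := ∫ ω, ((1 + S ω * (Tᵀ * T))⁻¹ * S ω * (Tᵀ * T)).trace ∂Pr with hμ
  have hμ0 : 0 ≤ μ := by
    rw [hμ]
    refine integral_nonneg_of_ae ?_
    filter_upwards [hS_psd] with ω hω
    exact CKTaux.trace_SQ_nonneg hω hQpsd
  -- positive-direction inequality (valid for all i ≤ j)
  have hplus : ∀ i j : Fin t, i ≤ j →
      (∫ ω, ((1 + S ω * (Tᵀ * T))⁻¹ * S ω * E i j).trace ∂Pr) - 2 * T i j * μ ≤ 0 := by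
    intro i j hij
    have hdd : ∀ k : Fin t, T k k = 0 → 0 ≤ (Dm i j) k k := by
      intro k _
      rw [hDmApp]
      rcases Classical.em (k = i ∧ k = j) with h | h
      · rw [if_pos h]; norm_num
      · rw [if_neg h]
    have h := CKTaux.master Pr S hS_meas hS_psd hLint T hT hmax' (Dm i j)
      (hDut i j hij) hdd (T i j) (hcval i j hij)
    rw [← hEeq i j] at h
    rw [hsplit (E i j) (2 * T i j)] at h
    exact h
  -- negative-direction inequality
  have hminus : ∀ i j : Fin t, i ≤ j → (i = j → 0 < T i i) →
      0 ≤ (∫ ω, ((1 + S ω * (Tᵀ * T))⁻¹ * S ω * E i j).trace ∂Pr) - 2 * T i j * μ := by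
    intro i j hij hdiagpos
    have hdd : ∀ k : Fin t, T k k = 0 → 0 ≤ (-(Dm i j)) k k := by
      intro k hk
      rw [Matrix.neg_apply, hDmApp]
      rcases Classical.em (k = i ∧ k = j) with h | h
      · exfalso
        rcases h with ⟨rfl, rfl⟩
        exact absurd hk (hdiagpos rfl).ne'
      · simp [h]
    have h := CKTaux.master Pr S hS_meas hS_psd hLint T hT hmax' (-(Dm i j))
      (hDutNeg i j hij) hdd (-(T i j)) (hcvalNeg i j hij)
    have em : (-(Dm i j))ᵀ * T + Tᵀ * (-(Dm i j)) - (2 * -T i j) • (Tᵀ * T)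
        = -(E i j - (2 * T i j) • (Tᵀ * T)) := by
      rw [hEeq i j, Matrix.transpose_neg, Matrix.neg_mul, Matrix.mul_neg]
      ext m n
      simp only [Matrix.sub_apply, Matrix.add_apply, Matrix.neg_apply, Matrix.smul_apply,
        smul_eq_mul]
      ring
    rw [em] at h
    have eneg : (fun ω => ((1 + S ω * (Tᵀ * T))⁻¹ * S ω
          * (-(E i j - (2 * T i j) • (Tᵀ * T)))).trace)
        = fun ω => -(((1 + S ω * (Tᵀ * T))⁻¹ * S ω
          * (E i j - (2 * T i j) • (Tᵀ * T))).trace) := by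
      funext ω
      rw [Matrix.mul_neg, Matrix.trace_neg]
    rw [eneg, MeasureTheory.integral_neg, hsplit (E i j) (2 * T i j)] at h
    linarith
  refine ⟨μ, hμ0, ?_, ?_, ?_⟩
  · intro i j hij
    have h1 := hplus i j hij.le
    have h2 := hminus i j hij.le (fun he => absurd he hij.ne)
    have : (∫ ω, ((1 + S ω * (Tᵀ * T))⁻¹ * S ω * E i j).trace ∂Pr) = 2 * T i j * μ := by
      linarith
    rw [this]; ring
  · intro i hpos
    have h1 := hplus i i le_rfl
    have h2 := hminus i i le_rfl (fun _ => hpos)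
    have : (∫ ω, ((1 + S ω * (Tᵀ * T))⁻¹ * S ω * E i i).trace ∂Pr) = 2 * T i i * μ := by
      linarith
    rw [this]; ring
  · intro i hzero
    have h1 := hplus i i le_rfl
    rw [hzero] at h1
    linarith
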